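/- For the standard generalized Fibonacci sequence with gcd(a,b) = 1, we have gcd(F_m, F_n) = F_{gcd(m,n)} for all m, n ≥ 1 (up to sign, i.e., the gcd of |F_m| and |F_n| equals |F_{gcd(m,n)}|). -/

import Mathlib

private lemma gcd_add_mul_aux (x y c : ℤ) : Int.gcd (x + c * y) y = Int.gcd x y := by
  have A : ∀ x c : ℤ, Int.gcd x y ∣ Int.gcd (x + c * y) y := by
    intro x c
    rw [← Int.natCast_dvd_natCast]
    exact Int.natCast_dvd_natCast.mpr (Int.dvd_gcd (dvd_add (Int.gcd_dvd_left x y) ((Int.gcd_dvd_right x y).mul_left c))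
      (Int.gcd_dvd_right x y))
  refine Nat.dvd_antisymm ?_ (A x c)
  have := A (x + c * y) (-c)
  simpa using this

private lemma gcd_mul_cancel_aux {v y : ℤ} (u : ℤ) (h : Int.gcd v y = 1) :
    Int.gcd (u * v) y = Int.gcd u y := by
  rw [Int.gcd_def, Int.natAbs_mul, Nat.Coprime.gcd_mul_right_cancel _ h, ← Int.gcd_def]

theorem general_fib_gcd (a b : ℤ) (hab : Int.gcd a b = 1)
    (F : ℕ → ℤ) (hF0 : F 0 = 0) (hF1 : F 1 = 1)
    (hF : ∀ n, F (n + 2) = a * F (n + 1) + b * F n) :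
    ∀ m n : ℕ, 1 ≤ m → 1 ≤ n →
      Int.gcd (F m) (F n) = (F (Nat.gcd m n)).natAbs := by
  -- gcd (F (n+1)) b = 1
  have hcopb : ∀ n, Int.gcd (F (n + 1)) b = 1 := by
    intro n
    induction n with
    | zero => simp [hF1]
    | succ k ih =>
      rw [hF, mul_comm b (F k), gcd_add_mul_aux]
      rw [← Int.isCoprime_iff_gcd_eq_one] at ih ⊢
      exact IsCoprime.mul_left (Int.isCoprime_iff_gcd_eq_one.mpr hab) ih
  -- consecutive terms coprime
  have hcons : ∀ n, Int.gcd (F n) (F (n + 1)) = 1 := by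
    intro n
    induction n with
    | zero => simp [hF0, hF1]
    | succ k ih =>
      rw [Int.gcd_comm, hF, add_comm, gcd_add_mul_aux]
      rw [← Int.isCoprime_iff_gcd_eq_one] at ih ⊢
      refine IsCoprime.mul_left ?_ ih
      rw [Int.isCoprime_iff_gcd_eq_one, Int.gcd_comm]
      exact hcopb k
  -- addition formula
  have hadd : ∀ m n, F (m + n + 1) = F (m + 1) * F (n + 1) + b * F m * F n := by
    intro m
    induction m using Nat.twoStepInduction with
    | zero => intro n; simp [hF0, hF1]
    | one =>
      intro n
      have h2 : F 2 = a := by rw [hF 0, hF0, hF1]; ring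
      rw [show 1 + n + 1 = n + 2 by ring, hF n, h2, hF1]
      ring
    | more k ih1 ih2 =>
      intro n
      have key : F (k + 2 + n + 1) = a * F (k + 1 + n + 1) + b * F (k + n + 1) := by
        rw [show k + 2 + n + 1 = (k + n + 1) + 2 from by ring, hF,
          show k + n + 1 + 1 = k + 1 + n + 1 from by ring]
      have ih2' : F (k + 1 + n + 1) = F (k + 2) * F (n + 1) + b * F (k + 1) * F n := ih2 n
      have h3 : F (k + 2 + 1) = a * F (k + 2) + b * F (k + 1) := hF (k + 1)
      rw [key, ih2', ih1 n, h3, hF k]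
      ring
  -- Euclid step
  have hstep : ∀ m n, Int.gcd (F (m + n)) (F n) = Int.gcd (F m) (F n) := by
    intro m n
    cases m with
    | zero => rw [Nat.zero_add, hF0, Int.gcd_self, Int.gcd_zero_left]
    | succ k =>
      rw [show k + 1 + n = k + n + 1 from by ring, hadd k n, gcd_add_mul_aux,
        gcd_mul_cancel_aux _ (by rw [Int.gcd_comm]; exact hcons n)]
  -- iterate
  have hiter : ∀ k r m, Int.gcd (F (r + m * k)) (F m) = Int.gcd (F r) (F m) := by
    intro k
    induction k with
    | zero => simp
    | succ j ih =>
      intro r m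
      rw [show r + m * (j + 1) = (r + m * j) + m from by ring, hstep, ih]
  -- main induction
  have main : ∀ m n, Int.gcd (F m) (F n) = (F (Nat.gcd m n)).natAbs := by
    intro m n
    induction m, n using Nat.gcd.induction with
    | H0 n => rw [Nat.gcd_zero_left, hF0, Int.gcd_zero_left]
    | H1 m n hm ih =>
      rw [Nat.gcd_rec, ← ih, Int.gcd_comm (F m) (F n)]
      conv_lhs => rw [show n = n % m + m * (n / m) from (Nat.mod_add_div n m).symm]
      rw [hiter]
  intro m n _ _
  exact main m n
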